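/- For each (s, l) ∈ (0, s̄) × (0, l̄), the point Ψ(s, l) = (γ(s), ξ(s, l)) is an equilibrium of the combined transcription-translation model, where ξ is defined by ξ_m(s,l) = l, ξ_i(s,l) = l/(1-ξ_{i+1}(s,l)) for 1 ≤ i ≤ m-1, ξ_0(s,l) = η_c l/(η(1-ξ_1(s,l))), ξ_{m+1}(s,l) = (Gλ_cη_c)/(νδ)·s·l. -/

import Mathlib

/-- For each `(s, l) ∈ (0, s̄) × (0, l̄)`, the point
`Ψ(s, l) = (γ(s), ξ(s, l))` is an equilibrium of the combined
transcription–translation model. -/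
theorem Psi_is_equilibrium
    (n m : ℕ) (hn : 2 ≤ n) (hm : 2 ≤ m)
    (G lam lamc nu eta etac delta : ℝ)
    (hG : 0 < G) (hlam : 0 < lam) (hlamc : 0 < lamc) (hnu : 0 < nu)
    (heta : 0 < eta) (hetac : 0 < etac) (hdelta : 0 < delta)
    (sbar lbar s l : ℝ) (hs : s ∈ Set.Ioo 0 sbar) (hl : l ∈ Set.Ioo 0 lbar)
    (γ ξ : ℕ → ℝ)
    -- the transcription equilibrium curve γ(s)
    (hγn : γ n = s)
    (hγmid : ∀ i, 1 ≤ i → i ≤ n - 1 → γ i = s / (1 - γ (i + 1)))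
    (hγ0 : γ 0 = lamc * s / (lam * (1 - γ 1)))
    (hγlast : γ (n + 1) = G * lamc / nu * s)
    (hγbound : ∀ i, 1 ≤ i → i ≤ n → γ i ∈ Set.Ioo (0 : ℝ) 1)
    -- the translation fibre ξ(s, l)
    (hξm : ξ m = l)
    (hξmid : ∀ i, 1 ≤ i → i ≤ m - 1 → ξ i = l / (1 - ξ (i + 1)))
    (hξ0 : ξ 0 = etac * l / (eta * (1 - ξ 1)))
    (hξlast : ξ (m + 1) = G * lamc * etac / (nu * delta) * s * l)
    (hξbound : ∀ i, 1 ≤ i → i ≤ m → ξ i ∈ Set.Ioo (0 : ℝ) 1) :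
    -- transcription part: ẋ = f₁(x) vanishes at γ(s)
    (-G * lam * γ 0 * (1 - γ 1) + G * lamc * γ n = 0) ∧
    (lam * γ 0 * (1 - γ 1) - lamc * γ 1 * (1 - γ 2) = 0) ∧
    (∀ i, 2 ≤ i → i ≤ n - 1 →
      lamc * γ (i - 1) * (1 - γ i) - lamc * γ i * (1 - γ (i + 1)) = 0) ∧
    (lamc * γ (n - 1) * (1 - γ n) - lamc * γ n = 0) ∧
    (G * lamc * γ n - nu * γ (n + 1) = 0) ∧
    -- translation part: ż = f₂(x, z) vanishes at (γ(s), ξ(s, l)), with M = γ(n+1)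
    (-(G * lamc * γ n - nu * γ (n + 1)) * (∑ i ∈ Finset.Icc 1 m, ξ i)
      - γ (n + 1) * eta * ξ 0 * (1 - ξ 1) + γ (n + 1) * etac * ξ m = 0) ∧
    (eta * ξ 0 * (1 - ξ 1) - etac * ξ 1 * (1 - ξ 2) = 0) ∧
    (∀ i, 2 ≤ i → i ≤ m - 1 →
      etac * ξ (i - 1) * (1 - ξ i) - etac * ξ i * (1 - ξ (i + 1)) = 0) ∧
    (etac * ξ (m - 1) * (1 - ξ m) - etac * ξ m = 0) ∧
    (γ (n + 1) * etac * ξ m - delta * ξ (m + 1) = 0) := by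
  have hγne : ∀ i, 1 ≤ i → i ≤ n → 1 - γ i ≠ 0 := fun i h1 h2 => by
    have := (hγbound i h1 h2).2; intro h; linarith
  have hξne : ∀ i, 1 ≤ i → i ≤ m → 1 - ξ i ≠ 0 := fun i h1 h2 => by
    have := (hξbound i h1 h2).2; intro h; linarith
  have hγprod : ∀ i, 1 ≤ i → i ≤ n - 1 → γ i * (1 - γ (i + 1)) = s := by
    intro i h1 h2
    rw [hγmid i h1 h2, div_mul_cancel₀ _ (hγne (i + 1) (by omega) (by omega))]
  have hξprod : ∀ i, 1 ≤ i → i ≤ m - 1 → ξ i * (1 - ξ (i + 1)) = l := by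
    intro i h1 h2
    rw [hξmid i h1 h2, div_mul_cancel₀ _ (hξne (i + 1) (by omega) (by omega))]
  have hγ0p : lam * γ 0 * (1 - γ 1) = lamc * s := by
    rw [hγ0]; field_simp [hγne 1 le_rfl (by omega)]
  have hξ0p : eta * ξ 0 * (1 - ξ 1) = etac * l := by
    rw [hξ0]; field_simp [hξne 1 le_rfl (by omega)]
  have h5 : G * lamc * γ n - nu * γ (n + 1) = 0 := by
    rw [hγn, hγlast]; field_simp; ring
  refine ⟨by linear_combination -G * hγ0p + G * lamc * hγn, ?_, ?_, ?_, h5, ?_, ?_, ?_, ?_, ?_⟩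
  · linear_combination hγ0p - lamc * hγprod 1 le_rfl (by omega)
  · intro i h2 h3
    obtain ⟨j, rfl⟩ : ∃ j, i = j + 1 := ⟨i - 1, by omega⟩
    simp only [Nat.add_sub_cancel]
    linear_combination lamc * hγprod j (by omega) (by omega)
      - lamc * hγprod (j + 1) (by omega) h3
  · obtain ⟨k, rfl⟩ : ∃ k, n = k + 1 := ⟨n - 1, by omega⟩
    simp only [Nat.add_sub_cancel]
    linear_combination lamc * hγprod k (by omega) (by omega) - lamc * hγn
  · linear_combination (-(∑ i ∈ Finset.Icc 1 m, ξ i)) * h5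
      - γ (n + 1) * hξ0p + γ (n + 1) * etac * hξm
  · linear_combination hξ0p - etac * hξprod 1 le_rfl (by omega)
  · intro i h2 h3
    obtain ⟨j, rfl⟩ : ∃ j, i = j + 1 := ⟨i - 1, by omega⟩
    simp only [Nat.add_sub_cancel]
    linear_combination etac * hξprod j (by omega) (by omega)
      - etac * hξprod (j + 1) (by omega) h3
  · obtain ⟨k, rfl⟩ : ∃ k, m = k + 1 := ⟨m - 1, by omega⟩
    simp only [Nat.add_sub_cancel]
    linear_combination etac * hξprod k (by omega) (by omega) - etac * hξm
  · rw [hγlast, hξm, hξlast]; field_simp; ring
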